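/- The Schur functions s_λ, as λ ranges over partitions of n, form a ℤ-basis for the degree-n homogeneous component Λ^n of the ring of symmetric functions. -/

import Mathlib

/-!
We model symmetric functions concretely: a symmetric function of homogeneous degree `n`
(an element of `Λ^n`) is a formal power series in the variables `x_0, x_1, x_2, …`
(an element of `MvPowerSeries ℕ ℤ`) that is invariant under all permutations of the
variables and supported on monomials of total degree `n`.  The Schur function `s_λ` is
defined combinatorially: its coefficient on a monomial `x^α` is the number of
semistandard Young tableaux of shape `λ` whose weight is `α`.
-/

open MvPowerSeries Finsupp

attribute [local instance] Classical.propDecidable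

/-- The total degree of a monomial. -/
def degOf (d : ℕ →₀ ℕ) : ℕ := d.sum fun _ k => k

/-- The Young diagram of a partition (rows given by the parts, in decreasing order). -/
noncomputable def toYD {n : ℕ} (l : n.Partition) : YoungDiagram :=
  YoungDiagram.ofRowLens (l.parts.sort (· ≥ ·)) (Multiset.pairwise_sort _ _).sortedGE

/-- The Schur function `s_μ = Σ_T x^{α_T}`, where the sum is over all semistandard Young
tableaux `T` of shape `μ` and `α_T` records the number of occurrences of each entry
of `T`.  Equivalently, the coefficient of `x^α` in `s_μ` is the number of semistandard
Young tableaux of shape `μ` and weight `α`. -/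
noncomputable def schurFn (μ : YoungDiagram) : MvPowerSeries ℕ ℤ :=
  fun α => (Nat.card {T : SemistandardYoungTableau μ //
    ∀ i : ℕ, (μ.cells.filter fun c => T c.1 c.2 = i).card = α i} : ℤ)

/-- The homogeneous degree `n` part `Λ^n` of the ring of symmetric functions over `ℤ`:
permutation-invariant power series supported in total degree `n`. -/
noncomputable def LambdaDeg (n : ℕ) : Submodule ℤ (MvPowerSeries ℕ ℤ) where
  carrier := {φ | (∀ (e : Equiv.Perm ℕ) (d : ℕ →₀ ℕ),
      MvPowerSeries.coeff (Finsupp.mapDomain e d) φ = MvPowerSeries.coeff d φ) ∧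
    ∀ d : ℕ →₀ ℕ, MvPowerSeries.coeff d φ ≠ 0 → degOf d = n}
  add_mem' := by
    rintro a b ⟨ha1, ha2⟩ ⟨hb1, hb2⟩
    refine ⟨fun e d => ?_, fun d hd => ?_⟩
    · simp only [map_add, ha1, hb1]
    · by_contra h
      rw [map_add] at hd
      rw [fun h' : MvPowerSeries.coeff d a = 0 => h'] at hd
      · rw [fun h' : MvPowerSeries.coeff d b = 0 => h'] at hd
        · simp at hd
        · by_contra hb; exact h (hb2 d hb)
      · by_contra hA; exact h (ha2 d hA)
  zero_mem' := by
    refine ⟨fun e d => by simp, fun d hd => ?_⟩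
    simp at hd
  smul_mem' := by
    rintro c x ⟨hx1, hx2⟩
    refine ⟨fun e d => ?_, fun d hd => ?_⟩
    · rw [LinearMap.map_smul_of_tower, LinearMap.map_smul_of_tower, hx1]
    · apply hx2
      intro h
      rw [map_smul, h, smul_zero] at hd
      exact hd rfl
  
section Basics

variable {n : ℕ}

/-- sorted parts list -/
noncomputable def pl {n : ℕ} (l : n.Partition) : List ℕ := l.parts.sort (· ≥ ·)

/-- The monomial exponent of a partition. -/
noncomputable def dl {n : ℕ} (l : n.Partition) : ℕ →₀ ℕ :=
  Finsupp.onFinset (Finset.range (pl l).length) (fun r => (pl l).getD r 0)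
    (by
      intro r h
      rw [Finset.mem_range]
      by_contra hr
      push_neg at hr
      exact h (List.getD_eq_default _ _ hr))

lemma dl_apply {l : n.Partition} (r : ℕ) : dl l r = (pl l).getD r 0 := rfl

lemma mem_toYD {l : n.Partition} {r c : ℕ} : (r, c) ∈ toYD l ↔ c < dl l r := by
  rw [dl_apply, toYD, YoungDiagram.mem_ofRowLens]
  simp only [pl]
  constructor
  · rintro ⟨h, hc⟩
    rwa [List.getD_eq_getElem _ _ h]
  · intro hc
    have hr : r < (l.parts.sort (· ≥ ·)).length := by
      by_contra hr
      push_neg at hr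
      rw [List.getD_eq_default _ _ hr] at hc
      omega
    exact ⟨hr, by rwa [List.getD_eq_getElem _ _ hr] at hc⟩

lemma rowLen_toYD {l : n.Partition} (r : ℕ) : (toYD l).rowLen r = dl l r := by
  have h : ∀ c, c < (toYD l).rowLen r ↔ c < dl l r := fun c =>
    (YoungDiagram.mem_iff_lt_rowLen).symm.trans mem_toYD
  have h1 := h ((toYD l).rowLen r)
  have h2 := h (dl l r)
  omega

lemma sum_pl {l : n.Partition} : (pl l).sum = n := by
  have : ((pl l : List ℕ) : Multiset ℕ) = l.parts := Multiset.sort_eq _ _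
  have h2 := congrArg Multiset.sum this
  simpa using h2.trans l.parts_sum

end Basics
namespace BK

open Finset

variable {μ : YoungDiagram}

/-- weight of a tableau -/
noncomputable def wt {μ : YoungDiagram} (T : SemistandardYoungTableau μ) (j : ℕ) : ℕ :=
  (μ.cells.filter fun c => T c.1 c.2 = j).card

lemma mem_of_ne_zero {T : SemistandardYoungTableau μ} {r c : ℕ} (h : T r c ≠ 0) : (r, c) ∈ μ := by
  by_contra hm; exact h (T.zeros hm)

/-- A cell is `i`-free: it has value `i` not paired with an `i+1` below it, or value `i+1`
not paired with an `i` above it. -/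
def Free (T : SemistandardYoungTableau μ) (i r c : ℕ) : Prop :=
  (r, c) ∈ μ ∧ ((T r c = i ∧ T (r + 1) c ≠ i + 1) ∨ (T r c = i + 1 ∧ (r = 0 ∨ T (r - 1) c ≠ i)))

noncomputable def F (T : SemistandardYoungTableau μ) (i r : ℕ) : Finset ℕ :=
  (Finset.range (μ.rowLen r)).filter (fun c => Free T i r c)

noncomputable def A (T : SemistandardYoungTableau μ) (i r : ℕ) : Finset ℕ :=
  (F T i r).filter (fun c => T r c = i)

noncomputable def B (T : SemistandardYoungTableau μ) (i r : ℕ) : Finset ℕ :=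
  (F T i r).filter (fun c => T r c = i + 1)

noncomputable def mF (T : SemistandardYoungTableau μ) (i r : ℕ) : ℕ :=
  if h : (F T i r).Nonempty then (F T i r).min' h else 0

noncomputable def aN (T : SemistandardYoungTableau μ) (i r : ℕ) : ℕ := (A T i r).card
noncomputable def bN (T : SemistandardYoungTableau μ) (i r : ℕ) : ℕ := (B T i r).card

variable {T : SemistandardYoungTableau μ} {i r c : ℕ}

lemma mem_F : c ∈ F T i r ↔ Free T i r c := by
  constructor
  · intro h; exact (Finset.mem_filter.mp h).2
  · intro h
    exact Finset.mem_filter.mpr ⟨Finset.mem_range.mpr (YoungDiagram.mem_iff_lt_rowLen.mp h.1), h⟩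

lemma free_val (h : Free T i r c) : T r c = i ∨ T r c = i + 1 := by
  rcases h.2 with h1 | h1
  · exact Or.inl h1.1
  · exact Or.inr h1.1

lemma not_free_of_val (h1 : T r c ≠ i) (h2 : T r c ≠ i + 1) : ¬ Free T i r c := by
  intro h; rcases free_val h with h' | h' <;> tauto

lemma pairedI_not_free (h1 : T r c = i) (h2 : T (r + 1) c = i + 1) : ¬ Free T i r c := by
  rintro ⟨-, h | h⟩
  · exact h.2 h2
  · omega

lemma pairedJ_not_free (h1 : T r c = i + 1) (hr : r ≠ 0) (h2 : T (r - 1) c = i) :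
    ¬ Free T i r c := by
  rintro ⟨-, h | h⟩
  · omega
  · rcases h.2 with h' | h' <;> tauto

/-- squeeze for values along a row -/
lemma squeeze {c1 c2 v : ℕ} (h1 : T r c1 = v) (h2 : T r c2 = v) (hc1 : c1 ≤ c) (hc2 : c ≤ c2)
    (hm : (r, c2) ∈ μ) : T r c = v := by
  have hmc : (r, c) ∈ μ := μ.up_left_mem le_rfl hc2 hm
  have l1 : T r c ≤ v := h2 ▸ T.row_weak_of_le hc2 hm
  have l2 : v ≤ T r c := h1 ▸ T.row_weak_of_le hc1 hmc
  omega

lemma claimL {c' : ℕ} (hf : Free T i r c) (hc' : c' < c) (hm' : (r, c') ∈ μ)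
    (hnf : ¬ Free T i r c') : T r c' ≤ i := by
  have hmv := free_val hf
  have h1 : T r c' ≤ T r c := T.row_weak hc' hf.1
  by_contra h
  push_neg at h
  have hv' : T r c' = i + 1 := by omega
  -- c' is a paired i+1
  have hp : r ≠ 0 ∧ T (r - 1) c' = i := by
    by_contra hp
    exact hnf ⟨hm', Or.inr ⟨hv', by omega⟩⟩
  have hvc : T r c = i + 1 := by omega
  have hm1 : (r - 1, c) ∈ μ := μ.up_left_mem (Nat.pred_le r) le_rfl hf.1
  have h2 : T (r - 1) c' ≤ T (r - 1) c := T.row_weak hc' hm1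
  have h3 : T (r - 1) c < T r c := by
    have := T.col_strict (show r - 1 < r by omega) hf.1
    exact this
  have h4 : T (r - 1) c = i := by omega
  rcases hf.2 with h5 | h5
  · omega
  · rcases h5.2 with h6 | h6 <;> tauto

lemma claimR {c' : ℕ} (hf : Free T i r c) (hc' : c < c') (hm' : (r, c') ∈ μ)
    (hnf : ¬ Free T i r c') : i + 1 ≤ T r c' := by
  have hmv := free_val hf
  have h1 : T r c ≤ T r c' := T.row_weak hc' hm'
  by_contra h
  push_neg at h
  have hv' : T r c' = i := by omega
  have hp : T (r + 1) c' = i + 1 := by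
    by_contra hp
    exact hnf ⟨hm', Or.inl ⟨hv', hp⟩⟩
  have hm1 : (r + 1, c') ∈ μ := mem_of_ne_zero (show T (r+1) c' ≠ 0 by omega)
  have hvc : T r c = i := by omega
  have h2 : T (r + 1) c ≤ T (r + 1) c' := T.row_weak hc' hm1
  have hm2 : (r + 1, c) ∈ μ := μ.up_left_mem le_rfl (le_of_lt hc') hm1
  have h3 : T r c < T (r + 1) c := T.col_strict (by omega) hm2
  have h4 : T (r + 1) c = i + 1 := by omega
  rcases hf.2 with h5 | h5
  · omega
  · omega

lemma F_convex {c1 c2 : ℕ} (h1 : c1 ∈ F T i r) (h2 : c2 ∈ F T i r) (hc1 : c1 ≤ c)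
    (hc2 : c ≤ c2) : c ∈ F T i r := by
  rcases eq_or_lt_of_le hc1 with rfl | hc1'
  · exact h1
  rcases eq_or_lt_of_le hc2 with rfl | hc2'
  · exact h2
  rw [mem_F] at h1 h2 ⊢
  have hm : (r, c) ∈ μ := μ.up_left_mem le_rfl hc2 h2.1
  by_contra hnf
  have hR := claimR h1 hc1' hm hnf
  have hL := claimL h2 hc2' hm hnf
  omega

/-- a convex nonempty finset of naturals is an interval -/
lemma convex_eq_Ico (s : Finset ℕ) (hs : s.Nonempty)
    (hc : ∀ a ∈ s, ∀ b ∈ s, ∀ x, a ≤ x → x ≤ b → x ∈ s) :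
    s = Finset.Ico (s.min' hs) (s.min' hs + s.card) := by
  apply Finset.ext
  intro x
  rw [Finset.mem_Ico]
  constructor
  · intro hx
    refine ⟨s.min'_le x hx, ?_⟩
    have hsub2 : Finset.Icc (s.min' hs) x ⊆ s := fun y hy =>
      hc _ (s.min'_mem hs) _ hx y (Finset.mem_Icc.mp hy).1 (Finset.mem_Icc.mp hy).2
    have hh := Finset.card_le_card hsub2
    rw [Nat.card_Icc] at hh
    have hmin := s.min'_le x hx
    omega
  · rintro ⟨h1x, h2x⟩
    have hsub : s ⊆ Finset.Icc (s.min' hs) (s.max' hs) := fun y hy =>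
      Finset.mem_Icc.mpr ⟨s.min'_le y hy, s.le_max' y hy⟩
    have hh := Finset.card_le_card hsub
    rw [Nat.card_Icc] at hh
    have hmm : s.min' hs ≤ s.max' hs := s.min'_le _ (s.max'_mem hs)
    have hxmax : x ≤ s.max' hs := by omega
    exact hc _ (s.min'_mem hs) _ (s.max'_mem hs) x h1x hxmax

end BK
namespace BK

open Finset

variable {μ : YoungDiagram} {T : SemistandardYoungTableau μ} {i r c : ℕ}

lemma A_union_B : A T i r ∪ B T i r = F T i r := by
  apply Finset.ext
  intro x
  simp only [Finset.mem_union, A, B, Finset.mem_filter]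
  constructor
  · rintro (h | h) <;> exact h.1
  · intro h
    rcases free_val (mem_F.mp h) with h' | h'
    · exact Or.inl ⟨h, h'⟩
    · exact Or.inr ⟨h, h'⟩

lemma A_disj_B : Disjoint (A T i r) (B T i r) := by
  rw [Finset.disjoint_left]
  intro x hx hx'
  rw [A, Finset.mem_filter] at hx
  rw [B, Finset.mem_filter] at hx'
  omega

lemma card_F : (F T i r).card = aN T i r + bN T i r := by
  rw [aN, bN, ← Finset.card_union_of_disjoint A_disj_B, A_union_B]

lemma A_before_B {c1 c2 : ℕ} (h1 : c1 ∈ A T i r) (h2 : c2 ∈ B T i r) : c1 < c2 := by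
  rw [A, Finset.mem_filter] at h1
  rw [B, Finset.mem_filter] at h2
  have hm2 : (r, c2) ∈ μ := (mem_F.mp h2.1).1
  by_contra h
  push_neg at h
  have := T.row_weak_of_le h (mem_F.mp h1.1).1
  omega

lemma F_eq : F T i r = Finset.Ico (mF T i r) (mF T i r + aN T i r + bN T i r) := by
  by_cases h : (F T i r).Nonempty
  · have := convex_eq_Ico (F T i r) h (fun a ha b hb x hax hxb => F_convex ha hb hax hxb)
    have hm : mF T i r = (F T i r).min' h := dif_pos h
    rw [card_F] at this
    rw [this, hm]
    congr 1
    omega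
  · rw [Finset.not_nonempty_iff_eq_empty] at h
    have hA : A T i r = ∅ := by
      rw [← Finset.subset_empty, ← h]; exact Finset.filter_subset _ _
    have hB : B T i r = ∅ := by
      rw [← Finset.subset_empty, ← h]; exact Finset.filter_subset _ _
    rw [h, aN, bN, hA, hB]
    simp

lemma A_eq : A T i r = Finset.Ico (mF T i r) (mF T i r + aN T i r) := by
  by_cases hA : (A T i r).Nonempty
  · have hF : (F T i r).Nonempty := by
      obtain ⟨x, hx⟩ := hA
      exact ⟨x, (Finset.mem_filter.mp hx).1⟩
    have hmin : (A T i r).min' hA = mF T i r := by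
      rw [mF, dif_pos hF]
      apply le_antisymm
      · -- F.min' ∈ F = A ∪ B; if in B then any element of A is < it, contradiction with min
        have hmem' := (F T i r).min'_mem hF
        have hmem : (F T i r).min' hF ∈ A T i r ∪ B T i r := by
          rw [A_union_B]; exact hmem'
        rw [Finset.mem_union] at hmem
        rcases hmem with hm | hm
        · exact Finset.min'_le _ _ hm
        · obtain ⟨y, hy⟩ := hA
          have h1 := A_before_B hy hm
          have h2 : (F T i r).min' hF ≤ y :=
            Finset.min'_le _ _ (Finset.mem_filter.mp hy).1
          have h3 := Finset.min'_le _ _ hy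
          omega
      · exact Finset.le_min' _ _ _ fun y hy =>
          Finset.min'_le _ _ (Finset.mem_filter.mp hy).1
    have hconv : ∀ a ∈ A T i r, ∀ b ∈ A T i r, ∀ x, a ≤ x → x ≤ b → x ∈ A T i r := by
      intro a ha b hb x hax hxb
      have haf := Finset.mem_filter.mp ha
      have hbf := Finset.mem_filter.mp hb
      have hxF : x ∈ F T i r := F_convex haf.1 hbf.1 hax hxb
      refine Finset.mem_filter.mpr ⟨hxF, ?_⟩
      exact squeeze haf.2 hbf.2 hax hxb (mem_F.mp hbf.1).1
    have := convex_eq_Ico (A T i r) hA hconv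
    rw [hmin] at this
    exact this
  · rw [Finset.not_nonempty_iff_eq_empty] at hA
    rw [hA, aN, hA]
    simp

lemma B_eq : B T i r = Finset.Ico (mF T i r + aN T i r) (mF T i r + aN T i r + bN T i r) := by
  have h1 : B T i r = F T i r \ A T i r := by
    rw [← A_union_B, Finset.union_sdiff_cancel_left A_disj_B]
  rw [h1, F_eq, A_eq]
  apply Finset.ext
  intro x
  simp only [Finset.mem_sdiff, Finset.mem_Ico]
  omega

/-- the new entry function of the Bender–Knuth involution -/
noncomputable def newE (T : SemistandardYoungTableau μ) (i : ℕ) : ℕ → ℕ → ℕ := fun r c =>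
  if c ∈ F T i r then (if c < mF T i r + bN T i r then i else i + 1) else T r c

lemma newE_of_not_mem (h : c ∉ F T i r) : newE T i r c = T r c := by
  rw [newE, if_neg h]

lemma newE_val (h : c ∈ F T i r) : newE T i r c = i ∨ newE T i r c = i + 1 := by
  rw [newE, if_pos h]
  split <;> simp

lemma newE_val_le (h : c ∈ F T i r) : i ≤ newE T i r c ∧ newE T i r c ≤ i + 1 := by
  rcases newE_val h with h' | h' <;> omega

lemma newE_of_val (h1 : T r c ≠ i) (h2 : T r c ≠ i + 1) : newE T i r c = T r c :=
  newE_of_not_mem (fun h => not_free_of_val h1 h2 (mem_F.mp h))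

lemma mem_F_val (h : c ∈ F T i r) : T r c = i ∨ T r c = i + 1 := free_val (mem_F.mp h)

/-- column step for the new filling -/
lemma newE_col_step (hm : (r + 1, c) ∈ μ) : newE T i r c < newE T i (r + 1) c := by
  have huv : T r c < T (r + 1) c := T.col_strict (Nat.lt_succ_self r) hm
  by_cases hv1 : T (r + 1) c = i
  · -- u < i, both cells keep low values
    have hu : T r c < i := by omega
    have h1 : newE T i r c = T r c := newE_of_val (by omega) (by omega)
    have h2 : i ≤ newE T i (r + 1) c := by
      by_cases h : c ∈ F T i (r + 1)
      · exact (newE_val_le h).1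
      · rw [newE_of_not_mem h, hv1]
    omega
  by_cases hv2 : T (r + 1) c = i + 1
  · by_cases hu1 : T r c = i
    · -- paired pair: both unchanged
      have h1 : newE T i r c = T r c :=
        newE_of_not_mem (fun h => pairedI_not_free hu1 hv2 (mem_F.mp h))
      have h2 : newE T i (r + 1) c = T (r + 1) c :=
        newE_of_not_mem (fun h =>
          pairedJ_not_free hv2 (Nat.succ_ne_zero r) (by simpa using hu1) (mem_F.mp h))
      omega
    · have hu : T r c < i := by omega
      have h1 : newE T i r c = T r c := newE_of_val (by omega) (by omega)
      have h2 : i ≤ newE T i (r + 1) c := by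
        by_cases h : c ∈ F T i (r + 1)
        · exact (newE_val_le h).1
        · rw [newE_of_not_mem h]; omega
      omega
  · -- T (r+1) c different from i, i+1, hence unchanged
    have h2 : newE T i (r + 1) c = T (r + 1) c := newE_of_val hv1 hv2
    by_cases h : c ∈ F T i r
    · have hval := mem_F_val h
      have : i + 1 < T (r + 1) c := by omega
      have := (newE_val_le h).2
      omega
    · rw [newE_of_not_mem h]
      omega

/-- The Bender–Knuth involution on tableaux. -/
noncomputable def bk (T : SemistandardYoungTableau μ) (i : ℕ) : SemistandardYoungTableau μ where
  entry := newE T i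
  row_weak' := by
    intro r j1 j2 hj hm
    have hm1 : (r, j1) ∈ μ := μ.up_left_mem le_rfl (le_of_lt hj) hm
    by_cases h1 : j1 ∈ F T i r <;> by_cases h2 : j2 ∈ F T i r
    · rw [newE, if_pos h1, newE, if_pos h2]
      split <;> split <;> omega
    · have hR := claimR (mem_F.mp h1) hj hm (fun hf => h2 (mem_F.mpr hf))
      rw [newE_of_not_mem h2]
      have := (newE_val_le h1).2
      omega
    · have hL := claimL (mem_F.mp h2) hj hm1 (fun hf => h1 (mem_F.mpr hf))
      rw [newE_of_not_mem h1]
      have := (newE_val_le h2).1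
      omega
    · rw [newE_of_not_mem h1, newE_of_not_mem h2]
      exact T.row_weak hj hm
  col_strict' := by
    intro r1 r2 j hr hm
    have key : ∀ k r', (r' + (k + 1), j) ∈ μ → newE T i r' j < newE T i (r' + (k + 1)) j := by
      intro k
      induction k with
      | zero => intro r' hm'; exact newE_col_step hm'
      | succ k ih =>
        intro r' hm'
        have hm'' : (r' + (k + 1), j) ∈ μ := μ.up_left_mem (by omega) le_rfl hm'
        have h1 := ih r' hm''
        have h2 : newE T i (r' + (k + 1)) j < newE T i (r' + (k + 1) + 1) j :=
          newE_col_step (by rw [show r' + (k + 1) + 1 = r' + (k + 1 + 1) by omega]; exact hm')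
        rw [show r' + (k + 1) + 1 = r' + (k + 1 + 1) by omega] at h2
        omega
    have h := key (r2 - r1 - 1) r1 (by
      have : r1 + (r2 - r1 - 1 + 1) = r2 := by omega
      rw [this]; exact hm)
    have heq : r1 + (r2 - r1 - 1 + 1) = r2 := by omega
    rwa [heq] at h
  zeros' := by
    intro r' c' hm
    have h : c' ∉ F T i r' := by
      intro h
      exact hm (mem_F.mp h).1
    rw [newE_of_not_mem h]
    exact T.zeros hm

lemma bk_apply (r c : ℕ) : bk T i r c = newE T i r c := rfl

end BK
namespace BK

open Finset

variable {μ : YoungDiagram} {T : SemistandardYoungTableau μ} {i r c : ℕ}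

lemma free_bk_of_free (h : Free T i r c) : Free (bk T i) i r c := by
  have hcF : c ∈ F T i r := mem_F.mpr h
  rcases newE_val hcF with hw | hw
  · refine ⟨h.1, Or.inl ⟨hw, ?_⟩⟩
    show newE T i (r + 1) c ≠ i + 1
    by_cases hmb : (r + 1, c) ∈ μ
    · have hgt : T r c < T (r + 1) c := T.col_strict (Nat.lt_succ_self r) hmb
      rcases h.2 with ⟨hv, hnb⟩ | ⟨hv, -⟩
      · rw [newE_of_val (by omega) hnb]; exact hnb
      · rw [newE_of_val (by omega) (by omega)]; omega
    · have hz : T (r + 1) c = 0 := T.zeros hmb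
      rw [newE_of_not_mem (fun hf => hmb (mem_F.mp hf).1)]
      omega
  · refine ⟨h.1, Or.inr ⟨hw, ?_⟩⟩
    by_cases hr : r = 0
    · exact Or.inl hr
    right
    show newE T i (r - 1) c ≠ i
    have hmu : (r - 1, c) ∈ μ := μ.up_left_mem (Nat.pred_le r) le_rfl h.1
    have hlt : T (r - 1) c < T r c := T.col_strict (by omega) h.1
    rcases h.2 with ⟨hv, -⟩ | ⟨hv, hna⟩
    · rw [newE_of_val (by omega) (by omega)]; omega
    · have hne : T (r - 1) c ≠ i := by rcases hna with h' | h' <;> tauto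
      rw [newE_of_val (by omega) (by omega)]; omega

lemma not_free_bk (hm : (r, c) ∈ μ) (h : ¬ Free T i r c) : ¬ Free (bk T i) i r c := by
  have hcF : c ∉ F T i r := fun hf => h (mem_F.mp hf)
  have hval : bk T i r c = T r c := newE_of_not_mem hcF
  by_cases hv1 : T r c = i
  · have hb : T (r + 1) c = i + 1 := by
      by_contra hb; exact h ⟨hm, Or.inl ⟨hv1, hb⟩⟩
    have hnf1 : c ∉ F T i (r + 1) := fun hf =>
      pairedJ_not_free hb (Nat.succ_ne_zero r) (by simpa using hv1) (mem_F.mp hf)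
    have hval1 : bk T i (r + 1) c = i + 1 := by
      rw [bk_apply, newE_of_not_mem hnf1]; exact hb
    rintro ⟨-, ⟨e1, e2⟩ | ⟨e1, -⟩⟩
    · exact e2 hval1
    · rw [hval] at e1; omega
  by_cases hv2 : T r c = i + 1
  · have hp : r ≠ 0 ∧ T (r - 1) c = i := by
      by_contra hp
      refine h ⟨hm, Or.inr ⟨hv2, ?_⟩⟩
      by_cases hr0 : r = 0
      · exact Or.inl hr0
      · right; intro hcon; exact hp ⟨hr0, hcon⟩
    have hnf1 : c ∉ F T i (r - 1) := fun hf =>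
      pairedI_not_free hp.2 (by rw [show r - 1 + 1 = r by omega]; exact hv2) (mem_F.mp hf)
    have hval1 : bk T i (r - 1) c = i := by
      rw [bk_apply, newE_of_not_mem hnf1]; exact hp.2
    rintro ⟨-, ⟨e1, -⟩ | ⟨-, e2 | e2⟩⟩
    · rw [hval] at e1; omega
    · exact hp.1 e2
    · exact e2 hval1
  · intro hf
    rcases free_val hf with h' | h' <;> rw [hval] at h' <;> tauto

lemma F_bk : F (bk T i) i r = F T i r := by
  apply Finset.ext
  intro x
  rw [mem_F, mem_F]
  constructor
  · intro hf
    by_contra hnf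
    exact not_free_bk hf.1 hnf hf
  · exact free_bk_of_free

lemma mF_bk : mF (bk T i) i r = mF T i r := by
  unfold mF
  rw [F_bk]

lemma newE_val_iff (h : c ∈ F T i r) :
    (newE T i r c = i ↔ c < mF T i r + bN T i r) := by
  rw [newE, if_pos h]
  split <;> omega

lemma A_bk : A (bk T i) i r = Finset.Ico (mF T i r) (mF T i r + bN T i r) := by
  apply Finset.ext
  intro x
  rw [A, Finset.mem_filter, F_bk, Finset.mem_Ico]
  constructor
  · rintro ⟨hF, hv⟩
    have h1 := (newE_val_iff hF).mp hv
    have h2 : x ∈ Finset.Ico (mF T i r) (mF T i r + aN T i r + bN T i r) := F_eq ▸ hF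
    rw [Finset.mem_Ico] at h2
    omega
  · rintro ⟨h1, h2⟩
    have hF : x ∈ F T i r := by
      rw [F_eq, Finset.mem_Ico]; omega
    exact ⟨hF, (newE_val_iff hF).mpr (by omega)⟩

lemma B_bk : B (bk T i) i r =
    Finset.Ico (mF T i r + bN T i r) (mF T i r + bN T i r + aN T i r) := by
  apply Finset.ext
  intro x
  rw [B, Finset.mem_filter, F_bk, Finset.mem_Ico]
  constructor
  · rintro ⟨hF, hv⟩
    have hv' : newE T i r x = i + 1 := hv
    have h1 : ¬ (newE T i r x = i) := by omega
    have h1' := (newE_val_iff hF).not.mp h1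
    have h2 : x ∈ Finset.Ico (mF T i r) (mF T i r + aN T i r + bN T i r) := F_eq ▸ hF
    rw [Finset.mem_Ico] at h2
    omega
  · rintro ⟨h1, h2⟩
    have hF : x ∈ F T i r := by
      rw [F_eq, Finset.mem_Ico]; omega
    refine ⟨hF, ?_⟩
    show newE T i r x = i + 1
    have := (newE_val_iff hF).not.mpr (show ¬ x < mF T i r + bN T i r by omega)
    rcases newE_val hF with h' | h' <;> omega

lemma aN_bk : aN (bk T i) i r = bN T i r := by
  rw [aN, A_bk, Nat.card_Ico]; omega

lemma bN_bk : bN (bk T i) i r = aN T i r := by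
  rw [bN, B_bk, Nat.card_Ico]; omega

lemma bk_bk : bk (bk T i) i = T := by
  apply SemistandardYoungTableau.ext
  intro r c
  show newE (bk T i) i r c = T r c
  by_cases hc : c ∈ F T i r
  · have hc' : c ∈ F (bk T i) i r := F_bk.symm ▸ hc
    rw [newE, if_pos hc', mF_bk, bN_bk]
    have hab : c ∈ A T i r ∪ B T i r := by rw [A_union_B]; exact hc
    rcases Finset.mem_union.mp hab with hA | hB
    · have hlt : c < mF T i r + aN T i r := by
        have := A_eq (T := T) (i := i) (r := r) ▸ hA
        exact (Finset.mem_Ico.mp this).2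
      rw [if_pos hlt]
      exact ((Finset.mem_filter.mp hA).2).symm
    · have hge : ¬ (c < mF T i r + aN T i r) := by
        have := B_eq (T := T) (i := i) (r := r) ▸ hB
        have := (Finset.mem_Ico.mp this).1
        omega
      rw [if_neg hge]
      exact ((Finset.mem_filter.mp hB).2).symm
  · have hc' : c ∉ F (bk T i) i r := F_bk.symm ▸ hc
    rw [newE_of_not_mem hc']
    exact newE_of_not_mem hc

end BK
namespace BK

open Finset

variable {μ : YoungDiagram} {T : SemistandardYoungTableau μ} {i r c : ℕ}

lemma below_ne_of_free (h : Free T i r c) : T (r + 1) c ≠ i + 1 := by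
  rcases h.2 with ⟨hv, hb⟩ | ⟨hv, -⟩
  · exact hb
  · by_cases hmb : (r + 1, c) ∈ μ
    · have := T.col_strict (show r < r + 1 by omega) hmb; omega
    · rw [T.zeros hmb]; omega

lemma above_ne_of_free (h : Free T i r c) (hr : r ≠ 0) : T (r - 1) c ≠ i := by
  rcases h.2 with ⟨hv, -⟩ | ⟨hv, hb⟩
  · have : T (r - 1) c < T r c := T.col_strict (by omega) h.1
    omega
  · rcases hb with h0 | h' <;> tauto

lemma bk_i_cases (hm : (r, c) ∈ μ) (hv : bk T i r c = i) :
    (T r c = i ∧ T (r + 1) c = i + 1 ∧ c ∉ F T i r) ∨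
      (c ∈ F T i r ∧ mF T i r ≤ c ∧ c < mF T i r + bN T i r) := by
  by_cases hc : c ∈ F T i r
  · right
    have h1 := (newE_val_iff hc).mp hv
    have h2 : c ∈ Finset.Ico (mF T i r) (mF T i r + aN T i r + bN T i r) := F_eq ▸ hc
    rw [Finset.mem_Ico] at h2
    exact ⟨hc, h2.1, h1⟩
  · left
    have hvt : T r c = i := by rw [← newE_of_not_mem hc]; exact hv
    have hb : T (r + 1) c = i + 1 := by
      by_contra hb
      exact hc (mem_F.mpr ⟨hm, Or.inl ⟨hvt, hb⟩⟩)
    exact ⟨hvt, hb, hc⟩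

lemma T_i1_cases (hm : (r, c) ∈ μ) (hv : T r c = i + 1) :
    (r ≠ 0 ∧ T (r - 1) c = i ∧ c ∉ F T i r) ∨ c ∈ B T i r := by
  by_cases hfree : Free T i r c
  · right
    exact Finset.mem_filter.mpr ⟨mem_F.mpr hfree, hv⟩
  · left
    have hp : r ≠ 0 ∧ T (r - 1) c = i := by
      by_contra hp
      refine hfree ⟨hm, Or.inr ⟨hv, ?_⟩⟩
      by_cases h0 : r = 0
      · exact Or.inl h0
      · right; intro hcon; exact hp ⟨h0, hcon⟩
    exact ⟨hp.1, hp.2, fun hf => hfree (mem_F.mp hf)⟩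

lemma mem_B_iff : c ∈ B T i r ↔
    (Free T i r c ∧ T r c = i + 1) := by
  rw [B, Finset.mem_filter, mem_F]

lemma wt_bk_i : wt (bk T i) i = wt T (i + 1) := by
  rw [wt, wt]
  refine Finset.card_nbij'
    (i := fun p => if T (p.1 + 1) p.2 = i + 1 then (p.1 + 1, p.2) else (p.1, p.2 + aN T i p.1))
    (j := fun p => if p.1 ≠ 0 ∧ T (p.1 - 1) p.2 = i then (p.1 - 1, p.2) else
      (p.1, p.2 - aN T i p.1)) ?hi ?hj ?left ?right
  case hi =>
    rintro ⟨r, c⟩ hp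
    dsimp only
    rw [Finset.mem_coe, Finset.mem_filter, YoungDiagram.mem_cells] at hp
    obtain ⟨hm, hv⟩ := hp
    rcases bk_i_cases hm hv with ⟨h1, h2, h3⟩ | ⟨h1, h2, h3⟩
    · rw [if_pos h2]
      rw [Finset.mem_coe, Finset.mem_filter, YoungDiagram.mem_cells]
      have hm2 : (r + 1, c) ∈ μ :=
        mem_of_ne_zero (show T (r + 1) c ≠ 0 by rw [h2]; exact Nat.succ_ne_zero i)
      exact ⟨hm2, h2⟩
    · have hne := below_ne_of_free (mem_F.mp h1)
      rw [if_neg hne]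
      have hB : c + aN T i r ∈ B T i r := by
        rw [B_eq, Finset.mem_Ico]
        omega
      rw [mem_B_iff] at hB
      rw [Finset.mem_coe, Finset.mem_filter, YoungDiagram.mem_cells]
      exact ⟨hB.1.1, hB.2⟩
  case hj =>
    rintro ⟨r, c⟩ hp
    dsimp only
    rw [Finset.mem_coe, Finset.mem_filter, YoungDiagram.mem_cells] at hp
    obtain ⟨hm, hv⟩ := hp
    rcases T_i1_cases hm hv with ⟨h1, h2, h3⟩ | hB
    · rw [if_pos ⟨h1, h2⟩]
      rw [Finset.mem_coe, Finset.mem_filter, YoungDiagram.mem_cells]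
      have hmu : (r - 1, c) ∈ μ := μ.up_left_mem (Nat.pred_le r) le_rfl hm
      have hnf : c ∉ F T i (r - 1) := fun hf =>
        pairedI_not_free h2 (by rw [show r - 1 + 1 = r by omega]; exact hv) (mem_F.mp hf)
      refine ⟨hmu, ?_⟩
      rw [bk_apply, newE_of_not_mem hnf]
      exact h2
    · have hfree := (mem_B_iff.mp hB).1
      have hcond : ¬ (r ≠ 0 ∧ T (r - 1) c = i) := by
        rintro ⟨h0, hc'⟩
        exact above_ne_of_free hfree h0 hc'
      rw [if_neg hcond]
      have hBI : c ∈ Finset.Ico (mF T i r + aN T i r) (mF T i r + aN T i r + bN T i r) :=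
        B_eq ▸ hB
      rw [Finset.mem_Ico] at hBI
      have hF2 : c - aN T i r ∈ F T i r := by
        rw [F_eq, Finset.mem_Ico]; omega
      rw [Finset.mem_coe, Finset.mem_filter, YoungDiagram.mem_cells]
      refine ⟨(mem_F.mp hF2).1, ?_⟩
      rw [bk_apply]
      exact (newE_val_iff hF2).mpr (by omega)
  case left =>
    rintro ⟨r, c⟩ hp
    dsimp only
    rw [Finset.mem_coe, Finset.mem_filter, YoungDiagram.mem_cells] at hp
    obtain ⟨hm, hv⟩ := hp
    rcases bk_i_cases hm hv with ⟨h1, h2, h3⟩ | ⟨h1, h2, h3⟩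
    · rw [if_pos h2]
      have hth : T (r + 1 - 1) c = i := by simpa using h1
      rw [if_pos (show r + 1 ≠ 0 ∧ T (r + 1 - 1) c = i from ⟨Nat.succ_ne_zero r, hth⟩)]
      simp
    · have hne := below_ne_of_free (mem_F.mp h1)
      rw [if_neg hne]
      have hB : c + aN T i r ∈ B T i r := by
        rw [B_eq, Finset.mem_Ico]; omega
      have hfree := (mem_B_iff.mp hB).1
      have hcond : ¬ (r ≠ 0 ∧ T (r - 1) (c + aN T i r) = i) := by
        rintro ⟨h0, hc'⟩
        exact above_ne_of_free hfree h0 hc'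
      rw [if_neg hcond]
      simp
  case right =>
    rintro ⟨r, c⟩ hp
    dsimp only
    rw [Finset.mem_coe, Finset.mem_filter, YoungDiagram.mem_cells] at hp
    obtain ⟨hm, hv⟩ := hp
    rcases T_i1_cases hm hv with ⟨h1, h2, h3⟩ | hB
    · rw [if_pos (show r ≠ 0 ∧ T (r - 1) c = i from ⟨h1, h2⟩)]
      dsimp only
      rw [show r - 1 + 1 = r by omega]
      have hv' : T r c = i + 1 := hv
      rw [if_pos hv']
    · have hfree := (mem_B_iff.mp hB).1
      have hcond : ¬ (r ≠ 0 ∧ T (r - 1) c = i) := by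
        rintro ⟨h0, hc'⟩
        exact above_ne_of_free hfree h0 hc'
      rw [if_neg hcond]
      have hBI : c ∈ Finset.Ico (mF T i r + aN T i r) (mF T i r + aN T i r + bN T i r) :=
        B_eq ▸ hB
      rw [Finset.mem_Ico] at hBI
      have hF2 : c - aN T i r ∈ F T i r := by
        rw [F_eq, Finset.mem_Ico]; omega
      have hne2 : T (r + 1) (c - aN T i r) ≠ i + 1 := below_ne_of_free (mem_F.mp hF2)
      dsimp only
      rw [if_neg hne2]
      have hceq : c - aN T i r + aN T i r = c := by omega
      rw [hceq]

lemma wt_bk_other {j : ℕ} (h1 : j ≠ i) (h2 : j ≠ i + 1) : wt (bk T i) j = wt T j := by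
  rw [wt, wt]
  congr 1
  apply Finset.filter_congr
  intro p hp
  rw [YoungDiagram.mem_cells] at hp
  by_cases hc : p.2 ∈ F T i p.1
  · have hbv := newE_val hc
    have htv := mem_F_val hc
    constructor
    · intro h; exfalso; rw [bk_apply] at h; omega
    · intro h; exfalso; omega
  · rw [bk_apply, newE_of_not_mem hc]

lemma wt_pair (S : SemistandardYoungTableau μ) :
    wt S i + wt S (i + 1) = (μ.cells.filter fun p => S p.1 p.2 = i ∨ S p.1 p.2 = i + 1).card := by
  rw [wt, wt, Finset.filter_or, Finset.card_union_of_disjoint]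
  rw [Finset.disjoint_left]
  intro p hp hp'
  rw [Finset.mem_filter] at hp hp'
  omega

lemma wt_bk_i1 : wt (bk T i) (i + 1) = wt T i := by
  have h1 := wt_pair (μ := μ) (i := i) (bk T i)
  have h2 := wt_pair (μ := μ) (i := i) T
  have h3 : (μ.cells.filter fun p => bk T i p.1 p.2 = i ∨ bk T i p.1 p.2 = i + 1).card =
      (μ.cells.filter fun p => T p.1 p.2 = i ∨ T p.1 p.2 = i + 1).card := by
    congr 1
    apply Finset.filter_congr
    intro p hp
    by_cases hc : p.2 ∈ F T i p.1
    · have hbv := newE_val hc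
      have htv := mem_F_val hc
      rw [bk_apply]
      constructor <;> (intro; omega)
    · rw [bk_apply, newE_of_not_mem hc]
  have h4 := wt_bk_i (T := T) (i := i)
  omega

end BK
section Swap

open BK

lemma schurFn_coeff (μ : YoungDiagram) (α : ℕ →₀ ℕ) :
    MvPowerSeries.coeff α (schurFn μ) =
      (Nat.card {T : SemistandardYoungTableau μ // ∀ j, wt T j = α j} : ℤ) := rfl

lemma wt_bk_eq {μ : YoungDiagram} (T : SemistandardYoungTableau μ) (i j : ℕ) :
    wt (bk T i) j = wt T (Equiv.swap i (i + 1) j) := by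
  rcases eq_or_ne j i with rfl | h1
  · rw [Equiv.swap_apply_left]; exact wt_bk_i
  rcases eq_or_ne j (i + 1) with rfl | h2
  · rw [Equiv.swap_apply_right]; exact wt_bk_i1
  · rw [Equiv.swap_apply_of_ne_of_ne h1 h2]; exact wt_bk_other h1 h2

lemma schur_swap (μ : YoungDiagram) (i : ℕ) (α : ℕ →₀ ℕ) :
    MvPowerSeries.coeff (Finsupp.mapDomain (Equiv.swap i (i + 1)) α) (schurFn μ) =
      MvPowerSeries.coeff α (schurFn μ) := by
  rw [schurFn_coeff, schurFn_coeff]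
  congr 1
  apply Nat.card_congr
  have hα : ∀ j, Finsupp.mapDomain (Equiv.swap i (i + 1)) α j = α (Equiv.swap i (i + 1) j) := by
    intro j
    rw [Finsupp.mapDomain_equiv_apply, Equiv.symm_swap]
  refine ⟨fun T0 => ⟨bk T0.1 i, ?_⟩, fun T0 => ⟨bk T0.1 i, ?_⟩, ?_, ?_⟩
  · intro j
    rw [wt_bk_eq]
    have h := T0.2 (Equiv.swap i (i + 1) j)
    rw [hα] at h
    rwa [Equiv.swap_apply_self] at h
  · intro j
    rw [wt_bk_eq, hα]
    exact T0.2 _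
  · intro T0
    apply Subtype.ext
    exact bk_bk
  · intro T0
    apply Subtype.ext
    exact bk_bk

end Swap
section Sorting

open Finsupp

/-- weakly decreasing finsupp -/
def sortedF (d : ℕ →₀ ℕ) : Prop := ∀ k, d (k + 1) ≤ d k

/-- the multiset of nonzero values -/
def vals (d : ℕ →₀ ℕ) : Multiset ℕ := d.support.val.map d

lemma sortedF_anti {d : ℕ →₀ ℕ} (hd : sortedF d) {j k : ℕ} (hjk : j ≤ k) : d k ≤ d j := by
  induction k, hjk using Nat.le_induction with
  | base => exact le_rfl
  | succ k hk ih => exact le_trans (hd k) ih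

lemma downclosed_eq_range (t : Finset ℕ) (h : ∀ k, k + 1 ∈ t → k ∈ t) :
    t = Finset.range t.card := by
  have hdc : ∀ m k, k ∈ t → k - m ∈ t := by
    intro m
    induction m with
    | zero => intro k hk; simpa using hk
    | succ m ih =>
      intro k hk
      have h2 := ih k hk
      rcases Nat.eq_zero_or_pos (k - m) with h0 | h0
      · rw [show k - (m + 1) = 0 by omega]
        rwa [h0] at h2
      · have : k - (m + 1) + 1 = k - m := by omega
        apply h
        rwa [this]
  have hfull : ∀ k ∈ t, ∀ j, j ≤ k → j ∈ t := by
    intro k hk j hj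
    have := hdc (k - j) k hk
    rwa [show k - (k - j) = j by omega] at this
  rcases Finset.eq_empty_or_nonempty t with rfl | ht
  · simp
  · have hmax := t.max'_mem ht
    have heq : t = Finset.range (t.max' ht + 1) := by
      apply Finset.ext
      intro x
      rw [Finset.mem_range]
      constructor
      · intro hx
        have := t.le_max' x hx
        omega
      · intro hx
        exact hfull _ hmax x (by omega)
    rw [heq, Finset.card_range]

lemma degOf_eq_sum_vals (d : ℕ →₀ ℕ) : degOf d = (vals d).sum := by
  rw [degOf, Finsupp.sum, vals, Finset.sum]

lemma exists_partition_of_sortedF {d : ℕ →₀ ℕ} (hd : sortedF d) {n : ℕ} (hn : degOf d = n) :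
    ∃ m : n.Partition, dl m = d ∧ m.parts = vals d := by
  classical
  set s := d.support.card with hs
  have hsupp : d.support = Finset.range s := by
    apply downclosed_eq_range
    intro k hk
    rw [Finsupp.mem_support_iff] at hk ⊢
    have := hd k
    omega
  set plist : List ℕ := (List.range s).map d with hplist
  have hvals : vals d = ↑plist := by
    rw [vals, hsupp, hplist]
    rfl
  have hsum : (plist : Multiset ℕ).sum = n := by
    rw [← hvals, ← degOf_eq_sum_vals, hn]
  have hsorted : plist.Pairwise (· ≥ ·) := by
    rw [hplist, List.pairwise_map]
    refine (List.pairwise_lt_range (n := s)).imp ?_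
    intro a b hab
    exact sortedF_anti hd (le_of_lt hab)
  have hpos : ∀ x ∈ (plist : Multiset ℕ), 0 < x := by
    intro x hx
    rw [Multiset.mem_coe, hplist, List.mem_map] at hx
    obtain ⟨k, hk, rfl⟩ := hx
    rw [List.mem_range] at hk
    have : k ∈ d.support := by rw [hsupp, Finset.mem_range]; exact hk
    rw [Finsupp.mem_support_iff] at this
    omega
  refine ⟨⟨(plist : Multiset ℕ), fun {x} hx => hpos x hx, hsum⟩, ?_, hvals.symm⟩
  have hpl : pl (⟨(plist : Multiset ℕ), fun {x} hx => hpos x hx, hsum⟩ : n.Partition) = plist := by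
    rw [pl]
    haveI : IsAntisymm ℕ (· ≥ ·) := ⟨fun a b h1 h2 => le_antisymm h2 h1⟩
    apply List.Perm.eq_of_pairwise' (Multiset.pairwise_sort _ _) hsorted
    rw [← Multiset.coe_eq_coe, Multiset.sort_eq]
  apply Finsupp.ext
  intro k
  rw [dl_apply, hpl]
  by_cases hk : k < s
  · rw [hplist, List.getD_eq_getElem _ _ (by rw [List.length_map, List.length_range]; exact hk)]
    simp
  · rw [List.getD_eq_default _ _ (by rw [hplist, List.length_map, List.length_range]; omega)]
    have : k ∉ d.support := by rw [hsupp, Finset.mem_range]; omega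
    rw [Finsupp.notMem_support_iff] at this
    omega

lemma vals_mapDomain (e : Equiv.Perm ℕ) (d : ℕ →₀ ℕ) :
    vals (Finsupp.mapDomain e d) = vals d := by
  classical
  rw [vals, vals, Finsupp.mapDomain_support_of_injective e.injective,
    Finset.image_val_of_injOn (e.injective.injOn), Multiset.map_map]
  apply Multiset.map_congr rfl
  intro x hx
  simp only [Function.comp_apply, Function.Embedding.coeFn_mk]
  exact Finsupp.mapDomain_apply e.injective d x

/-- measure for bubble sort -/
noncomputable def Wm (d : ℕ →₀ ℕ) : ℕ := d.sum fun a m => a * m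

lemma sort_reach_aux (φ : MvPowerSeries ℕ ℤ)
    (hφ : ∀ (k : ℕ) (d : ℕ →₀ ℕ),
      MvPowerSeries.coeff (Finsupp.mapDomain (Equiv.swap k (k + 1)) d) φ =
        MvPowerSeries.coeff d φ) :
    ∀ N d, Wm d < N → ∃ d₀, sortedF d₀ ∧ vals d₀ = vals d ∧
      MvPowerSeries.coeff d₀ φ = MvPowerSeries.coeff d φ := by
  intro N
  induction N with
  | zero => intro d h; omega
  | succ N ih =>
    intro d hW
    by_cases hs : sortedF d
    · exact ⟨d, hs, rfl, rfl⟩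
    · rw [sortedF] at hs
      push_neg at hs
      obtain ⟨k, hk⟩ := hs
      set e := Equiv.swap k (k + 1) with he
      set d' := Finsupp.mapDomain (e : ℕ ≃ ℕ) d with hd'
      have happ : ∀ j, d' j = d (e j) := by
        intro j
        rw [hd', he]
        rw [Finsupp.mapDomain_equiv_apply, Equiv.symm_swap]
      have hsupp : d'.support = d.support.image e := by
        rw [hd']
        exact Finsupp.mapDomain_support_of_injective e.injective d
      have hk1 : k + 1 ∈ d.support := by
        rw [Finsupp.mem_support_iff]; omega
      have hWlt : Wm d' < Wm d := by
        rw [Wm, Wm, Finsupp.sum, Finsupp.sum, hsupp,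
          Finset.sum_image (fun x _ y _ h => e.injective h)]
        have hterm : ∀ x, e x * d' (e x) = e x * d x := by
          intro x
          have hxx : e (e x) = x := by rw [he]; exact Equiv.swap_apply_self _ _ _
          rw [happ, hxx]
        rw [Finset.sum_congr rfl fun x _ => hterm x]
        -- now compare ∑ e x * d x with ∑ x * d x over d.support
        by_cases hkmem : k ∈ d.support
        · have h1 : ∀ (f : ℕ → ℕ), ∑ x ∈ d.support, f x =
              ∑ x ∈ (d.support.erase (k + 1)).erase k, f x + f k + f (k + 1) := by
            intro f
            rw [Finset.sum_erase_add _ _ (Finset.mem_erase.mpr ⟨by omega, hkmem⟩),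
              Finset.sum_erase_add _ _ hk1]
          rw [h1 (fun x => e x * d x), h1 (fun x => x * d x)]
          have hrest : ∑ x ∈ (d.support.erase (k + 1)).erase k, e x * d x =
              ∑ x ∈ (d.support.erase (k + 1)).erase k, x * d x := by
            apply Finset.sum_congr rfl
            intro x hx
            rw [Finset.mem_erase, Finset.mem_erase] at hx
            rw [he, Equiv.swap_apply_of_ne_of_ne hx.1 hx.2.1]
          rw [hrest, he, Equiv.swap_apply_left, Equiv.swap_apply_right]
          set X := k * d k
          set Y := k * d (k + 1)
          have e1 : (k + 1) * d k = X + d k := by rw [Nat.succ_mul]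
          have e2 : (k + 1) * d (k + 1) = Y + d (k + 1) := by rw [Nat.succ_mul]
          rw [e1, e2]
          omega
        · have h1 : ∀ (f : ℕ → ℕ), ∑ x ∈ d.support, f x =
              ∑ x ∈ d.support.erase (k + 1), f x + f (k + 1) := by
            intro f
            rw [Finset.sum_erase_add _ _ hk1]
          rw [h1 (fun x => e x * d x), h1 (fun x => x * d x)]
          have hrest : ∑ x ∈ d.support.erase (k + 1), e x * d x =
              ∑ x ∈ d.support.erase (k + 1), x * d x := by
            apply Finset.sum_congr rfl
            intro x hx
            rw [Finset.mem_erase] at hx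
            have hxk : x ≠ k := by rintro rfl; exact hkmem hx.2
            rw [he, Equiv.swap_apply_of_ne_of_ne hxk hx.1]
          rw [hrest, he, Equiv.swap_apply_right]
          have : k * d (k + 1) < (k + 1) * d (k + 1) := by
            apply Nat.mul_lt_mul_of_lt_of_le (by omega) le_rfl
            omega
          omega
      obtain ⟨d₀, hd₀s, hd₀v, hd₀c⟩ := ih d' (by omega)
      refine ⟨d₀, hd₀s, ?_, ?_⟩
      · rw [hd₀v, hd', vals_mapDomain]
      · rw [hd₀c, hd', he, hφ]

lemma sort_reach (φ : MvPowerSeries ℕ ℤ)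
    (hφ : ∀ (k : ℕ) (d : ℕ →₀ ℕ),
      MvPowerSeries.coeff (Finsupp.mapDomain (Equiv.swap k (k + 1)) d) φ =
        MvPowerSeries.coeff d φ) (d : ℕ →₀ ℕ) :
    ∃ d₀, sortedF d₀ ∧ vals d₀ = vals d ∧
      MvPowerSeries.coeff d₀ φ = MvPowerSeries.coeff d φ :=
  sort_reach_aux φ hφ (Wm d + 1) d (Nat.lt_succ_self _)

lemma sortedF_unique {d d' : ℕ →₀ ℕ} (hd : sortedF d) (hd' : sortedF d')
    (hv : vals d = vals d') : d = d' := by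
  have hdeg : degOf d = degOf d' := by
    rw [degOf_eq_sum_vals, degOf_eq_sum_vals, hv]
  obtain ⟨m, hm1, hm2⟩ := exists_partition_of_sortedF hd (rfl : degOf d = degOf d)
  obtain ⟨m', hm'1, hm'2⟩ := exists_partition_of_sortedF hd' hdeg.symm
  have : m = m' := by
    apply Nat.Partition.ext
    rw [hm2, hm'2, hv]
  rw [← hm1, ← hm'1, this]

end Sorting
section Mem

open BK Finsupp

lemma list_sum_getD (L : List ℕ) : ∑ r ∈ Finset.range L.length, L.getD r 0 = L.sum := by
  induction L with
  | nil => simp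
  | cons a L ih =>
    rw [List.length_cons, Finset.sum_range_succ']
    simp only [List.getD_cons_succ, List.getD_cons_zero]
    rw [ih, List.sum_cons, Nat.add_comm]

lemma cells_card {n : ℕ} (l : n.Partition) : (toYD l).cells.card = n := by
  have hmem : ∀ x ∈ (toYD l).cells, x.1 ∈ Finset.range (pl l).length := by
    rintro ⟨r, c⟩ hx
    rw [YoungDiagram.mem_cells, mem_toYD] at hx
    rw [Finset.mem_range]
    by_contra h
    push_neg at h
    rw [dl_apply, List.getD_eq_default _ _ h] at hx
    omega
  rw [Finset.card_eq_sum_card_fiberwise hmem]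
  have hfib : ∀ r, ((toYD l).cells.filter fun x => x.1 = r).card = dl l r := by
    intro r
    have : ((toYD l).cells.filter fun x => x.1 = r) = (toYD l).row r := by
      apply Finset.ext
      rintro ⟨a, b⟩
      rw [Finset.mem_filter, YoungDiagram.mem_row_iff, YoungDiagram.mem_cells]
    rw [this, ← YoungDiagram.rowLen_eq_card, rowLen_toYD]
  rw [Finset.sum_congr rfl fun r _ => hfib r]
  have : ∑ r ∈ Finset.range (pl l).length, dl l r =
      ∑ r ∈ Finset.range (pl l).length, (pl l).getD r 0 :=
    Finset.sum_congr rfl fun r _ => dl_apply r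
  rw [this, list_sum_getD, sum_pl]

lemma wt_total {μ : YoungDiagram} (T : SemistandardYoungTableau μ) (d : ℕ →₀ ℕ)
    (hT : ∀ j, wt T j = d j) : degOf d = μ.cells.card := by
  have hmem : ∀ x ∈ μ.cells, T x.1 x.2 ∈ d.support := by
    intro x hx
    rw [Finsupp.mem_support_iff, ← hT, wt]
    have hpos : x ∈ μ.cells.filter fun c => T c.1 c.2 = T x.1 x.2 :=
      Finset.mem_filter.mpr ⟨hx, rfl⟩
    have := Finset.card_pos.mpr ⟨x, hpos⟩
    omega
  rw [degOf, Finsupp.sum]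
  rw [Finset.card_eq_sum_card_fiberwise hmem]
  apply Finset.sum_congr rfl
  intro j _
  rw [← hT j, wt]

lemma schur_hom {n : ℕ} (l : n.Partition) {d : ℕ →₀ ℕ}
    (h : MvPowerSeries.coeff d (schurFn (toYD l)) ≠ 0) : degOf d = n := by
  rw [schurFn_coeff] at h
  have hcard : Nat.card {T : SemistandardYoungTableau (toYD l) // ∀ j, wt T j = d j} ≠ 0 := by
    intro h0
    rw [h0] at h
    exact h rfl
  have hne : Nonempty {T : SemistandardYoungTableau (toYD l) // ∀ j, wt T j = d j} := by
    by_contra hemp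
    rw [not_nonempty_iff] at hemp
    exact hcard (Nat.card_eq_zero.mpr (Or.inl hemp))
  obtain ⟨T, hT⟩ := hne.some
  rw [wt_total T d hT, cells_card]

lemma schur_symm {n : ℕ} (l : n.Partition) (e : Equiv.Perm ℕ) (d : ℕ →₀ ℕ) :
    MvPowerSeries.coeff (Finsupp.mapDomain e d) (schurFn (toYD l)) =
      MvPowerSeries.coeff d (schurFn (toYD l)) := by
  obtain ⟨d₀, hs₀, hv₀, hc₀⟩ := sort_reach _ (fun k d => schur_swap (toYD l) k d) d
  obtain ⟨d₁, hs₁, hv₁, hc₁⟩ := sort_reach _ (fun k d => schur_swap (toYD l) k d)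
    (Finsupp.mapDomain e d)
  have : d₁ = d₀ := sortedF_unique hs₁ hs₀ (by rw [hv₁, hv₀, vals_mapDomain])
  rw [← hc₁, this, hc₀]

lemma schur_mem_Lambda {n : ℕ} (l : n.Partition) : schurFn (toYD l) ∈ LambdaDeg n :=
  ⟨fun e d => schur_symm l e d, fun _ hd => schur_hom l hd⟩

end Mem
section Tri

open BK Finsupp

variable {n : ℕ}

lemma wt_highestWeight (μ : YoungDiagram) (j : ℕ) :
    wt (SemistandardYoungTableau.highestWeight μ) j = μ.rowLen j := by
  rw [wt]
  have : (μ.cells.filter fun c => SemistandardYoungTableau.highestWeight μ c.1 c.2 = j) =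
      μ.row j := by
    apply Finset.ext
    rintro ⟨a, b⟩
    rw [Finset.mem_filter, YoungDiagram.mem_row_iff, YoungDiagram.mem_cells]
    constructor
    · rintro ⟨h1, h2⟩
      refine ⟨h1, ?_⟩
      rwa [SemistandardYoungTableau.highestWeight_apply, if_pos h1] at h2
    · rintro ⟨h1, h2⟩
      refine ⟨h1, ?_⟩
      rwa [SemistandardYoungTableau.highestWeight_apply, if_pos h1]
  rw [this, YoungDiagram.rowLen_eq_card]

lemma row_le_entry {μ : YoungDiagram} (T : SemistandardYoungTableau μ) :
    ∀ r c, (r, c) ∈ μ → r ≤ T r c := by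
  intro r
  induction r with
  | zero => intro c _; omega
  | succ r ih =>
    intro c hm
    have h1 := ih c (μ.up_left_mem (by omega) le_rfl hm)
    have h2 := T.col_strict (show r < r + 1 by omega) hm
    omega

lemma eq_highestWeight {l : n.Partition} (T : SemistandardYoungTableau (toYD l))
    (hT : ∀ j, wt T j = dl l j) : ∀ r c, (r, c) ∈ toYD l → T r c = r := by
  intro r
  induction r using Nat.strong_induction_on with
  | _ r ih =>
    have hsub : ((toYD l).cells.filter fun c => T c.1 c.2 = r) ⊆ (toYD l).row r := by
      rintro ⟨a, b⟩ hx
      rw [Finset.mem_filter, YoungDiagram.mem_cells] at hx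
      rw [YoungDiagram.mem_row_iff]
      refine ⟨hx.1, ?_⟩
      have h1 := row_le_entry T a b hx.1
      rcases Nat.lt_or_ge a r with h | h
      · have := ih a h b hx.1
        simp only at hx
        omega
      · simp only at hx
        omega
    have hcard : ((toYD l).row r).card ≤ ((toYD l).cells.filter fun c => T c.1 c.2 = r).card := by
      have h1 := hT r
      rw [wt] at h1
      rw [← YoungDiagram.rowLen_eq_card, rowLen_toYD, h1]
    have heq := Finset.eq_of_subset_of_card_le hsub hcard
    intro c hm
    have : (r, c) ∈ (toYD l).row r := YoungDiagram.mem_row_iff.mpr ⟨hm, rfl⟩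
    rw [← heq, Finset.mem_filter] at this
    exact this.2

lemma K_diag (l : n.Partition) :
    MvPowerSeries.coeff (dl l) (schurFn (toYD l)) = 1 := by
  rw [schurFn_coeff]
  have hwt : ∀ j, wt (SemistandardYoungTableau.highestWeight (toYD l)) j = dl l j := by
    intro j
    rw [wt_highestWeight, rowLen_toYD]
  haveI : Unique {T : SemistandardYoungTableau (toYD l) // ∀ j, wt T j = dl l j} := {
    default := ⟨SemistandardYoungTableau.highestWeight (toYD l), hwt⟩
    uniq := by
      rintro ⟨T, hT⟩
      apply Subtype.ext
      apply SemistandardYoungTableau.ext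
      intro r c
      show T r c = SemistandardYoungTableau.highestWeight (toYD l) r c
      rw [SemistandardYoungTableau.highestWeight_apply]
      by_cases hm : (r, c) ∈ toYD l
      · rw [if_pos hm]
        exact eq_highestWeight T hT r c hm
      · rw [if_neg hm]
        exact T.zeros hm }
  rw [Nat.card_unique]
  norm_num

lemma nonempty_of_K_ne_zero {l m : n.Partition}
    (h : MvPowerSeries.coeff (dl m) (schurFn (toYD l)) ≠ 0) :
    ∃ T : SemistandardYoungTableau (toYD l), ∀ j, wt T j = dl m j := by
  rw [schurFn_coeff] at h
  have hcard : Nat.card {T : SemistandardYoungTableau (toYD l) // ∀ j, wt T j = dl m j} ≠ 0 := by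
    intro h0; rw [h0] at h; exact h rfl
  have hne : Nonempty {T : SemistandardYoungTableau (toYD l) // ∀ j, wt T j = dl m j} := by
    by_contra hemp
    rw [not_nonempty_iff] at hemp
    exact hcard (Nat.card_eq_zero.mpr (Or.inl hemp))
  obtain ⟨T, hT⟩ := hne.some
  exact ⟨T, hT⟩

lemma K_dom {l m : n.Partition}
    (h : MvPowerSeries.coeff (dl m) (schurFn (toYD l)) ≠ 0) (k : ℕ) :
    ∑ j ∈ Finset.range k, dl m j ≤ ∑ j ∈ Finset.range k, dl l j := by
  obtain ⟨T, hT⟩ := nonempty_of_K_ne_zero h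
  have hlhs : ∑ j ∈ Finset.range k, dl m j =
      ((toYD l).cells.filter fun c => T c.1 c.2 < k).card := by
    have hmem : ∀ x ∈ ((toYD l).cells.filter fun c => T c.1 c.2 < k),
        T x.1 x.2 ∈ Finset.range k := by
      intro x hx
      rw [Finset.mem_filter] at hx
      rw [Finset.mem_range]
      exact hx.2
    rw [Finset.card_eq_sum_card_fiberwise hmem]
    apply Finset.sum_congr rfl
    intro j hj
    rw [Finset.mem_range] at hj
    rw [← hT j, wt, Finset.filter_filter]
    congr 1
    apply Finset.filter_congr
    intro x _
    constructor
    · intro h2; exact ⟨by omega, h2⟩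
    · rintro ⟨h1, h2⟩; exact h2
  have hrhs : ∑ j ∈ Finset.range k, dl l j =
      ((toYD l).cells.filter fun c => c.1 < k).card := by
    have hmem : ∀ x ∈ ((toYD l).cells.filter fun c => c.1 < k), x.1 ∈ Finset.range k := by
      intro x hx
      rw [Finset.mem_filter] at hx
      rw [Finset.mem_range]
      exact hx.2
    rw [Finset.card_eq_sum_card_fiberwise hmem]
    apply Finset.sum_congr rfl
    intro j hj
    rw [Finset.mem_range] at hj
    rw [← rowLen_toYD, YoungDiagram.rowLen_eq_card, Finset.filter_filter]
    have hset : ((toYD l).cells.filter fun c => c.1 < k ∧ c.1 = j) = (toYD l).row j := by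
      apply Finset.ext
      intro x
      rw [Finset.mem_filter, YoungDiagram.mem_row_iff, YoungDiagram.mem_cells]
      constructor
      · rintro ⟨h1, h2, h3⟩; exact ⟨h1, h3⟩
      · rintro ⟨h1, h3⟩; exact ⟨h1, by omega, h3⟩
    rw [hset]
  rw [hlhs, hrhs]
  apply Finset.card_le_card
  intro x hx
  rw [Finset.mem_filter] at hx ⊢
  have hxm : x ∈ toYD l := by
    have := hx.1
    rwa [YoungDiagram.mem_cells] at this
  have := row_le_entry T x.1 x.2 hxm
  exact ⟨hx.1, by omega⟩

lemma dl_inj : Function.Injective (dl (n := n)) := by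
  intro m l h
  have hlen : ∀ (a b : n.Partition), dl a = dl b → (pl a).length ≤ (pl b).length := by
    intro a b hab
    by_contra hl
    push_neg at hl
    set k := (pl b).length
    have h1 : dl b k = 0 := by
      rw [dl_apply, List.getD_eq_default _ _ le_rfl]
    have h2 : dl a k ≠ 0 := by
      rw [dl_apply, List.getD_eq_getElem _ _ hl]
      have hmem : (pl a)[k] ∈ a.parts := by
        rw [← Multiset.mem_sort (· ≥ ·)]
        exact List.getElem_mem _
      have := a.parts_pos hmem
      omega
    rw [hab] at h2
    omega
  have hlen2 : (pl m).length = (pl l).length :=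
    le_antisymm (hlen m l h) (hlen l m h.symm)
  have hpl : pl m = pl l := by
    apply List.ext_getElem hlen2
    intro k h1 h2
    have := congrArg (fun d => d k) h
    rwa [dl_apply, dl_apply, List.getD_eq_getElem _ _ h1, List.getD_eq_getElem _ _ h2] at this
  apply Nat.Partition.ext
  have h1 : (↑(pl m) : Multiset ℕ) = m.parts := Multiset.sort_eq _ _
  have h2 : (↑(pl l) : Multiset ℕ) = l.parts := Multiset.sort_eq _ _
  rw [← h1, ← h2, hpl]

lemma dom_lex {l m : n.Partition} (hne : m ≠ l)
    (hdom : ∀ k, ∑ j ∈ Finset.range k, dl m j ≤ ∑ j ∈ Finset.range k, dl l j) :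
    toLex (dl m) < toLex (dl l) := by
  have hdne : dl m ≠ dl l := fun h => hne (dl_inj h)
  have hex : ∃ j, dl m j ≠ dl l j := by
    by_contra hc
    push_neg at hc
    exact hdne (Finsupp.ext hc)
  classical
  let j := Nat.find hex
  have hj : dl m j ≠ dl l j := Nat.find_spec hex
  have hmin : ∀ x, x < j → dl m x = dl l x := by
    intro x hx
    by_contra hc
    exact Nat.find_min hex hx hc
  have hlt : dl m j < dl l j := by
    have hd := hdom (j + 1)
    rw [Finset.sum_range_succ, Finset.sum_range_succ] at hd
    have : ∑ x ∈ Finset.range j, dl m x = ∑ x ∈ Finset.range j, dl l x := by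
      apply Finset.sum_congr rfl
      intro x hx
      exact hmin x (Finset.mem_range.mp hx)
    omega
  show Finsupp.Lex (· < ·) (· < ·) (dl m) (dl l)
  rw [Finsupp.lex_def]
  exact ⟨j, fun x hx => hmin x hx, hlt⟩

end Tri
section Main

open BK Finsupp

noncomputable def pOrd (n : ℕ) : LinearOrder (n.Partition) :=
  LinearOrder.lift' (fun l => toLex (dl l)) (fun a b h => dl_inj (by exact_mod_cast h))

attribute [local instance] pOrd

variable {n : ℕ}

lemma ple_iff {l m : n.Partition} : l ≤ m ↔ toLex (dl l) ≤ toLex (dl m) := Iff.rfl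

lemma plt_iff {l m : n.Partition} : l < m ↔ toLex (dl l) < toLex (dl m) := by
  rw [lt_iff_le_not_ge, lt_iff_le_not_ge, ple_iff, ple_iff]

/-- the Kostka matrix -/
noncomputable def SM (n : ℕ) : Matrix (n.Partition) (n.Partition) ℤ :=
  fun l m => MvPowerSeries.coeff (dl m) (schurFn (toYD l))

lemma SM_triangular : (SM n).BlockTriangular OrderDual.toDual := by
  intro l m hlm
  have hlt : l < m := hlm
  by_contra h0
  have hdom := K_dom (l := l) (m := m) h0
  rcases eq_or_ne m l with rfl | hne
  · exact lt_irrefl _ hlt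
  · have := dom_lex hne hdom
    rw [plt_iff] at hlt
    exact lt_asymm hlt this

lemma SM_det : (SM n).det = 1 := by
  rw [Matrix.det_of_lowerTriangular _ SM_triangular]
  have : ∀ l : n.Partition, SM n l l = 1 := fun l => K_diag l
  rw [Finset.prod_congr rfl fun l _ => this l]
  simp

lemma SM_unit : IsUnit (SM n).det := by
  rw [SM_det]; exact isUnit_one

lemma coeff_sum_smul (g : n.Partition → ℤ) (m : n.Partition) :
    MvPowerSeries.coeff (dl m) (∑ l, g l • schurFn (toYD l)) =
      Matrix.vecMul g (SM n) m := by
  rw [map_sum]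
  rw [Matrix.vecMul, dotProduct]
  apply Finset.sum_congr rfl
  intro l _
  rw [map_smul, smul_eq_mul]
  rfl

theorem schur_basis' (n : ℕ) :
    LinearIndependent ℤ (fun l : n.Partition => schurFn (toYD l)) ∧
      Submodule.span ℤ (Set.range fun l : n.Partition => schurFn (toYD l)) = LambdaDeg n := by
  constructor
  · rw [Fintype.linearIndependent_iff]
    intro g hg
    have hvec : Matrix.vecMul g (SM n) = 0 := by
      funext m
      rw [← coeff_sum_smul g m, hg, map_zero, Pi.zero_apply]
    have h2 : g = 0 := by
      have h3 := congrArg (fun v => Matrix.vecMul v (SM n)⁻¹) hvec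
      simp only [Matrix.vecMul_vecMul] at h3
      rw [Matrix.mul_nonsing_inv _ SM_unit, Matrix.vecMul_one, Matrix.zero_vecMul] at h3
      exact h3
    intro l
    rw [h2, Pi.zero_apply]
  · apply le_antisymm
    · rw [Submodule.span_le]
      rintro _ ⟨l, rfl⟩
      exact schur_mem_Lambda l
    · intro φ hφ
      set v : n.Partition → ℤ := fun m => MvPowerSeries.coeff (dl m) φ with hv
      set cv : n.Partition → ℤ := Matrix.vecMul v (SM n)⁻¹ with hcv
      have hc : Matrix.vecMul cv (SM n) = v := by
        rw [hcv, Matrix.vecMul_vecMul, Matrix.nonsing_inv_mul _ SM_unit, Matrix.vecMul_one]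
      set ψ := φ - ∑ l, cv l • schurFn (toYD l) with hψ
      have hψmem : ψ ∈ LambdaDeg n := by
        apply Submodule.sub_mem
        · exact hφ
        · exact Submodule.sum_mem _ fun l _ => Submodule.smul_mem _ _ (schur_mem_Lambda l)
      have hψcoeff : ∀ m : n.Partition, MvPowerSeries.coeff (dl m) ψ = 0 := by
        intro m
        rw [hψ, map_sub, coeff_sum_smul, hc]
        simp [hv]
      have hmem2 : (∀ (e : Equiv.Perm ℕ) (d : ℕ →₀ ℕ),
          MvPowerSeries.coeff (Finsupp.mapDomain e d) ψ = MvPowerSeries.coeff d ψ) ∧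
          ∀ d : ℕ →₀ ℕ, MvPowerSeries.coeff d ψ ≠ 0 → degOf d = n := hψmem
      have hzero : ψ = 0 := by
        apply MvPowerSeries.ext
        intro d
        rw [map_zero]
        by_contra hne
        have hdeg : degOf d = n := hmem2.2 d hne
        obtain ⟨d₀, hs₀, hv₀, hc₀⟩ := sort_reach ψ (fun k d => hmem2.1 (Equiv.swap k (k + 1)) d) d
        have hdeg₀ : degOf d₀ = n := by
          rw [degOf_eq_sum_vals, hv₀, ← degOf_eq_sum_vals, hdeg]
        obtain ⟨m, hm, -⟩ := exists_partition_of_sortedF hs₀ hdeg₀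
        rw [← hc₀, ← hm] at hne
        exact hne (hψcoeff m)
      have hφeq : φ = ∑ l, cv l • schurFn (toYD l) := by
        have := sub_eq_zero.mp (hψ ▸ hzero)
        exact this
      rw [hφeq]
      exact Submodule.sum_mem _ fun l _ =>
        Submodule.smul_mem _ _ (Submodule.subset_span ⟨l, rfl⟩)

end Main
/-- The Schur functions `s_λ`, as `λ` ranges over partitions of `n`, form a `ℤ`-basis
for the degree-`n` homogeneous component `Λ^n` of the ring of symmetric functions:
they are linearly independent and span `Λ^n`. -/
theorem schur_basis (n : ℕ) :
    LinearIndependent ℤ (fun l : n.Partition => schurFn (toYD l)) ∧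
      Submodule.span ℤ (Set.range fun l : n.Partition => schurFn (toYD l)) = LambdaDeg n := by
  exact schur_basis' n
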